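/- arXiv:1507.00551 — 3 statements merged into one kernel-verified Lean document; each statement's English description precedes it below -/
import Mathlib

section
/- Let f : ℝ₊ × X → X be a continuous semiflow on a metric space X, x ∈ X, and suppose C is a center of attraction of f(t,x). If for some q ∈ C and ε > 0 one has lim_{T→∞} (1/T) λ{t ∈ [0,T] : f(t,x) ∈ B_{3ε}(q)} = 0, then the closed set C \ B_{2ε}(q) is also a center of attraction of f(t,x). In particular, if C is minimal then every q ∈ C satisfies limsup_{T→∞} (1/T) λ{t ∈ [0,T] : f(t,x) ∈ U} > 0 for every neighborhood U of q. -/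
open MeasureTheory Filter Metric Set Topology
open scoped Classical

noncomputable section

/-- The set `S ⊆ ℝ` has density `α` in `[0,∞)`. -/
def HasDens (S : Set ℝ) (α : ℝ) : Prop :=
  Filter.Tendsto (fun T : ℝ => (MeasureTheory.volume (S ∩ Set.Icc 0 T)).toReal / T)
    Filter.atTop (nhds α)

/-- `f` is a continuous semiflow on `X` (time in `[0,∞)`). -/
def IsSemiflow {X : Type*} [MetricSpace X] (f : ℝ → X → X) : Prop :=
  ContinuousOn (fun p : ℝ × X => f p.1 p.2) (Set.Ici 0 ×ˢ Set.univ) ∧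
  (∀ x : X, f 0 x = x) ∧
  (∀ s t : ℝ, 0 ≤ s → 0 ≤ t → ∀ x : X, f s (f t x) = f (s + t) x)

/-- `C` is a center of attraction of the motion `f (t, x)`. -/
def IsCtr {X : Type*} [MetricSpace X] (f : ℝ → X → X) (x : X) (C : Set X) : Prop :=
  IsClosed C ∧ ∀ ε > (0 : ℝ), HasDens {t : ℝ | 0 ≤ t ∧ f t x ∈ Metric.thickening ε C} 1

/-- `C` is the minimal center of attraction of the motion `f (t, x)`. -/
def IsMCA {X : Type*} [MetricSpace X] (f : ℝ → X → X) (x : X) (C : Set X) : Prop :=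
  IsCtr f x C ∧ ∀ C' ⊆ C, IsCtr f x C' → C' = C

/-- Any subset of `Icc 0 T` has volume at most `ofReal T`. -/
lemma vol_le_ofReal {A : Set ℝ} {T : ℝ} (h : A ⊆ Set.Icc 0 T) :
    MeasureTheory.volume A ≤ ENNReal.ofReal T := by
  calc MeasureTheory.volume A ≤ MeasureTheory.volume (Set.Icc 0 T) := measure_mono h
    _ = ENNReal.ofReal T := by rw [Real.volume_Icc, sub_zero]

lemma ratio_nonneg {A : Set ℝ} {T : ℝ} (h : A ⊆ Set.Icc 0 T) :
    0 ≤ (MeasureTheory.volume A).toReal / T := by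
  rcases le_or_gt T 0 with hT | hT
  · have : MeasureTheory.volume A = 0 := by
      have := (vol_le_ofReal h).trans_eq (ENNReal.ofReal_eq_zero.mpr hT)
      exact le_antisymm this zero_le
    simp [this]
  · exact div_nonneg ENNReal.toReal_nonneg hT.le

lemma ratio_le_one {A : Set ℝ} {T : ℝ} (h : A ⊆ Set.Icc 0 T) :
    (MeasureTheory.volume A).toReal / T ≤ 1 := by
  rcases le_or_gt T 0 with hT | hT
  · have : MeasureTheory.volume A = 0 := by
      have := (vol_le_ofReal h).trans_eq (ENNReal.ofReal_eq_zero.mpr hT)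
      exact le_antisymm this zero_le
    simp [this]
  · rw [div_le_one hT]
    exact ENNReal.toReal_le_of_le_ofReal hT.le (vol_le_ofReal h)

theorem center_minus_ball_and_minimal_consequence {X : Type*} [MetricSpace X]
    (f : ℝ → X → X) (hf : IsSemiflow f) (x : X) (C : Set X) (hC : IsCtr f x C) :
    (∀ q ∈ C, ∀ ε > (0 : ℝ),
      Filter.Tendsto
        (fun T : ℝ =>
          (MeasureTheory.volume {t ∈ Set.Icc 0 T | f t x ∈ Metric.ball q (3 * ε)}).toReal / T)
        Filter.atTop (nhds 0) →
      IsCtr f x (C \ Metric.ball q (2 * ε))) ∧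
    ((∀ C' ⊆ C, IsCtr f x C' → C' = C) →
      ∀ q ∈ C, ∀ U ∈ nhds q,
        0 < Filter.limsup
          (fun T : ℝ => (MeasureTheory.volume {t ∈ Set.Icc 0 T | f t x ∈ U}).toReal / T)
          Filter.atTop) := by
  have main : ∀ q ∈ C, ∀ ε > (0 : ℝ),
      Filter.Tendsto
        (fun T : ℝ =>
          (MeasureTheory.volume {t ∈ Set.Icc 0 T | f t x ∈ Metric.ball q (3 * ε)}).toReal / T)
        Filter.atTop (nhds 0) →
      IsCtr f x (C \ Metric.ball q (2 * ε)) := by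
    intro q hq ε hε hball
    refine ⟨hC.1.sdiff isOpen_ball, ?_⟩
    intro δ hδ
    -- the big set with radius min δ ε
    have hδε : (0 : ℝ) < min δ ε := lt_min hδ hε
    have hB := hC.2 (min δ ε) hδε
    set A : Set ℝ := {t : ℝ | 0 ≤ t ∧ f t x ∈ Metric.thickening δ (C \ Metric.ball q (2 * ε))}
      with hA
    set B : Set ℝ := {t : ℝ | 0 ≤ t ∧ f t x ∈ Metric.thickening (min δ ε) C} with hBdef
    -- inclusion
    have hsub : ∀ T : ℝ, B ∩ Set.Icc 0 T ⊆
        (A ∩ Set.Icc 0 T) ∪ {t ∈ Set.Icc 0 T | f t x ∈ Metric.ball q (3 * ε)} := by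
      intro T t ht
      obtain ⟨⟨ht0, htB⟩, htI⟩ := ht
      rw [Metric.mem_thickening_iff] at htB
      obtain ⟨c, hcC, hdc⟩ := htB
      by_cases hcball : c ∈ Metric.ball q (2 * ε)
      · right
        refine ⟨htI, ?_⟩
        rw [Metric.mem_ball] at hcball ⊢
        have : dist (f t x) q ≤ dist (f t x) c + dist c q := dist_triangle _ _ _
        have h1 : dist (f t x) c < ε := hdc.trans_le (min_le_right _ _)
        linarith
      · left
        refine ⟨⟨ht0, ?_⟩, htI⟩
        rw [Metric.mem_thickening_iff]
        exact ⟨c, ⟨hcC, hcball⟩, hdc.trans_le (min_le_left _ _)⟩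
    -- measure inequality, then density squeeze
    have hlow : ∀ᶠ T in Filter.atTop,
        (MeasureTheory.volume (B ∩ Set.Icc 0 T)).toReal / T -
          (MeasureTheory.volume {t ∈ Set.Icc 0 T | f t x ∈ Metric.ball q (3 * ε)}).toReal / T ≤
        (MeasureTheory.volume (A ∩ Set.Icc 0 T)).toReal / T := by
      filter_upwards [Filter.eventually_gt_atTop (0 : ℝ)] with T hT
      have hfinA : MeasureTheory.volume (A ∩ Set.Icc 0 T) ≠ ⊤ :=
        ((vol_le_ofReal Set.inter_subset_right).trans_lt ENNReal.ofReal_lt_top).ne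
      have hfinS : MeasureTheory.volume {t ∈ Set.Icc 0 T | f t x ∈ Metric.ball q (3 * ε)} ≠ ⊤ :=
        ((vol_le_ofReal (Set.sep_subset _ _)).trans_lt ENNReal.ofReal_lt_top).ne
      have hm : MeasureTheory.volume (B ∩ Set.Icc 0 T) ≤
          MeasureTheory.volume (A ∩ Set.Icc 0 T) +
            MeasureTheory.volume {t ∈ Set.Icc 0 T | f t x ∈ Metric.ball q (3 * ε)} :=
        (measure_mono (hsub T)).trans (measure_union_le _ _)
      have hm' : (MeasureTheory.volume (B ∩ Set.Icc 0 T)).toReal ≤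
          (MeasureTheory.volume (A ∩ Set.Icc 0 T)).toReal +
            (MeasureTheory.volume {t ∈ Set.Icc 0 T | f t x ∈ Metric.ball q (3 * ε)}).toReal := by
        have := ENNReal.toReal_mono (ENNReal.add_ne_top.mpr ⟨hfinA, hfinS⟩) hm
        rwa [ENNReal.toReal_add hfinA hfinS] at this
      rw [sub_le_iff_le_add]
      calc (MeasureTheory.volume (B ∩ Set.Icc 0 T)).toReal / T ≤
          ((MeasureTheory.volume (A ∩ Set.Icc 0 T)).toReal +
            (MeasureTheory.volume {t ∈ Set.Icc 0 T | f t x ∈ Metric.ball q (3 * ε)}).toReal) / T :=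
            by exact div_le_div_of_nonneg_right hm' hT.le |>.trans_eq rfl
        _ = _ := by ring
    have hhigh : ∀ᶠ T in Filter.atTop,
        (MeasureTheory.volume (A ∩ Set.Icc 0 T)).toReal / T ≤ 1 :=
      Filter.Eventually.of_forall fun T => ratio_le_one Set.inter_subset_right
    have hlim : Filter.Tendsto
        (fun T : ℝ => (MeasureTheory.volume (B ∩ Set.Icc 0 T)).toReal / T -
          (MeasureTheory.volume {t ∈ Set.Icc 0 T | f t x ∈ Metric.ball q (3 * ε)}).toReal / T)
        Filter.atTop (nhds 1) := by
      have := hB.sub hball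
      simpa using this
    exact tendsto_of_tendsto_of_tendsto_of_le_of_le' hlim tendsto_const_nhds hlow hhigh
  refine ⟨main, ?_⟩
  intro hmin q hq U hU
  by_contra hcon
  push_neg at hcon
  obtain ⟨r, hr, hrU⟩ := Metric.mem_nhds_iff.mp hU
  set ε := r / 3 with hεdef
  have hε : 0 < ε := by positivity
  have h3ε : 3 * ε = r := by rw [hεdef]; ring
  set F : ℝ → ℝ := fun T => (MeasureTheory.volume {t ∈ Set.Icc 0 T | f t x ∈ U}).toReal / T
    with hF
  set G : ℝ → ℝ := fun T =>
    (MeasureTheory.volume {t ∈ Set.Icc 0 T | f t x ∈ Metric.ball q (3 * ε)}).toReal / T with hG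
  have hGF : ∀ T, G T ≤ F T := by
    intro T
    rcases le_or_gt T 0 with hT | hT
    · have hGz : MeasureTheory.volume {t ∈ Set.Icc 0 T | f t x ∈ Metric.ball q (3 * ε)} = 0 :=
        le_antisymm ((vol_le_ofReal (Set.sep_subset _ _)).trans_eq
          (ENNReal.ofReal_eq_zero.mpr hT)) zero_le
      have hFz : MeasureTheory.volume {t ∈ Set.Icc 0 T | f t x ∈ U} = 0 :=
        le_antisymm ((vol_le_ofReal (Set.sep_subset _ _)).trans_eq
          (ENNReal.ofReal_eq_zero.mpr hT)) zero_le
      simp only [hG, hF, hGz, hFz, ENNReal.toReal_zero, zero_div, le_refl]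
    · apply div_le_div_of_nonneg_right _ hT.le
      apply ENNReal.toReal_mono
      · exact ((vol_le_ofReal (Set.sep_subset _ _)).trans_lt ENNReal.ofReal_lt_top).ne
      · apply measure_mono
        intro t ⟨ht1, ht2⟩
        exact ⟨ht1, hrU (h3ε ▸ ht2)⟩
  have hG01 : ∀ T, G T ∈ Set.Icc (0 : ℝ) 1 := fun T =>
    ⟨ratio_nonneg (Set.sep_subset _ _), ratio_le_one (Set.sep_subset _ _)⟩
  have hF1 : ∀ T, F T ≤ 1 := fun T => ratio_le_one (Set.sep_subset _ _)
  -- limsup G ≤ limsup F ≤ 0, liminf G ≥ 0 ⇒ G → 0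
  have hGbdd : Filter.IsBoundedUnder (· ≤ ·) Filter.atTop G :=
    Filter.isBoundedUnder_of ⟨1, fun T => (hG01 T).2⟩
  have hGbdd' : Filter.IsBoundedUnder (· ≥ ·) Filter.atTop G :=
    Filter.isBoundedUnder_of ⟨0, fun T => (hG01 T).1⟩
  have hFbdd : Filter.IsBoundedUnder (· ≤ ·) Filter.atTop F :=
    Filter.isBoundedUnder_of ⟨1, hF1⟩
  have hGcob : Filter.IsCoboundedUnder (· ≤ ·) Filter.atTop G :=
    hGbdd'.isCoboundedUnder_le
  have hlimsupG : Filter.limsup G Filter.atTop ≤ 0 :=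
    (Filter.limsup_le_limsup (Filter.Eventually.of_forall hGF) hGcob hFbdd).trans hcon
  have hliminfG : (0 : ℝ) ≤ Filter.liminf G Filter.atTop :=
    Filter.le_liminf_of_le hGbdd.isCoboundedUnder_ge
      (Filter.Eventually.of_forall fun T => (hG01 T).1)
  have hGtend : Filter.Tendsto G Filter.atTop (nhds 0) :=
    tendsto_of_le_liminf_of_limsup_le hliminfG hlimsupG hGbdd hGbdd'
  have hctr := main q hq ε hε hGtend
  have heq := hmin _ Set.diff_subset hctr
  have : q ∈ C \ Metric.ball q (2 * ε) := by rw [heq]; exact hq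
  exact this.2 (Metric.mem_ball_self (by linarith))
end
end

section
/- Let f : ℝ₊ × X → X be a continuous semiflow on a Polish space X and f(t,p) a motion with precompact orbit whose minimal center of attraction C_p is generic but not a minimal subset of (X,f). Then there exists a residual subset S of C_p such that for every x ∈ S and every minimal subset Λ ⊂ C_p there is y ∈ Λ with: liminf_{t→∞} d(f(t,x), f(t,y)) = 0, limsup_{t→∞} d(f(t,x), f(t,y)) > 0, liminf_{t→∞} d(f(t,x), y) = 0, and limsup_{t→∞} d(f(t,x), y) ≥ (1/2) diam(C_p). -/
open MeasureTheory Filter Metric Set Topology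
open scoped Classical

noncomputable section

/-- `Λ` is invariant under the semiflow `f`. -/
def FlowInvariant {X : Type*} [MetricSpace X] (f : ℝ → X → X) (Λ : Set X) : Prop :=
  ∀ t : ℝ, 0 ≤ t → ∀ z ∈ Λ, f t z ∈ Λ

/-- `Λ` is a minimal set of the semiflow `f`. -/
def IsMinimalSet {X : Type*} [MetricSpace X] (f : ℝ → X → X) (Λ : Set X) : Prop :=
  Λ.Nonempty ∧ IsClosed Λ ∧ FlowInvariant f Λ ∧
    ∀ Λ' ⊆ Λ, Λ'.Nonempty → IsClosed Λ' → FlowInvariant f Λ' → Λ' = Λ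

namespace GenChaos

variable {X : Type*} [MetricSpace X]

/-- ratio function -/
def rat (A : Set ℝ) (T : ℝ) : ℝ := (volume (A ∩ Set.Icc 0 T)).toReal / T

/-- null upper density -/
def nullD (A : Set ℝ) : Prop := Tendsto (rat A) atTop (nhds 0)

/-- visit times of the motion of `y` to `U` -/
def vis (f : ℝ → X → X) (y : X) (U : Set X) : Set ℝ := {t | 0 ≤ t ∧ f t y ∈ U}

/-- points near which the motion of `y` spends positive upper density time -/
def Dset (f : ℝ → X → X) (y : X) : Set X := {x | ∀ ε > 0, ¬ nullD (vis f y (ball x ε))}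

/-- forward orbit -/
def orb (f : ℝ → X → X) (y : X) : Set X := {z | ∃ t : ℝ, 0 ≤ t ∧ f t y = z}

lemma rat_nonneg {A : Set ℝ} {T : ℝ} (hT : 0 ≤ T) : 0 ≤ rat A T :=
  div_nonneg ENNReal.toReal_nonneg hT

lemma vol_inter_lt_top (A : Set ℝ) {T : ℝ} : volume (A ∩ Set.Icc 0 T) < ⊤ :=
  lt_of_le_of_lt (measure_mono Set.inter_subset_right)
    (by rw [Real.volume_Icc]; exact ENNReal.ofReal_lt_top)

lemma rat_le_one {A : Set ℝ} {T : ℝ} (hT : 0 < T) : rat A T ≤ 1 := by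
  rw [rat, div_le_one hT]
  have h1 : volume (A ∩ Set.Icc 0 T) ≤ ENNReal.ofReal T := by
    calc volume (A ∩ Set.Icc 0 T) ≤ volume (Set.Icc 0 T) := measure_mono Set.inter_subset_right
    _ = ENNReal.ofReal T := by rw [Real.volume_Icc, sub_zero]
  calc (volume (A ∩ Set.Icc 0 T)).toReal ≤ (ENNReal.ofReal T).toReal :=
        ENNReal.toReal_mono ENNReal.ofReal_ne_top h1
  _ = T := ENNReal.toReal_ofReal hT.le

lemma toReal_vol_mono {A B : Set ℝ} (h : A ⊆ B) (T : ℝ) :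
    (volume (A ∩ Set.Icc 0 T)).toReal ≤ (volume (B ∩ Set.Icc 0 T)).toReal :=
  ENNReal.toReal_mono (vol_inter_lt_top B).ne (measure_mono (Set.inter_subset_inter_left _ h))

lemma rat_mono {A B : Set ℝ} (h : A ⊆ B) {T : ℝ} (hT : 0 ≤ T) : rat A T ≤ rat B T :=
  div_le_div_of_nonneg_right (toReal_vol_mono h T) hT

lemma nullD_mono {A B : Set ℝ} (h : A ⊆ B) (hB : nullD B) : nullD A := by
  refine squeeze_zero' ?_ ?_ hB
  · filter_upwards [eventually_ge_atTop (0:ℝ)] with T hT using rat_nonneg hT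
  · filter_upwards [eventually_ge_atTop (0:ℝ)] with T hT using rat_mono h hT

lemma nullD_empty : nullD (∅ : Set ℝ) := by
  have : rat ∅ = fun _ => 0 := by funext T; simp [rat]
  rw [nullD, this]; exact tendsto_const_nhds

lemma nullD_union {A B : Set ℝ} (hA : nullD A) (hB : nullD B) : nullD (A ∪ B) := by
  refine squeeze_zero' ?_ ?_ (by simpa using hA.add hB)
  · filter_upwards [eventually_ge_atTop (0:ℝ)] with T hT using rat_nonneg hT
  · filter_upwards [eventually_ge_atTop (0:ℝ)] with T hT
    rw [rat, rat, rat, ← add_div]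
    refine div_le_div_of_nonneg_right ?_ hT
    calc (volume ((A ∪ B) ∩ Set.Icc 0 T)).toReal
        ≤ (volume (A ∩ Set.Icc 0 T) + volume (B ∩ Set.Icc 0 T)).toReal := by
          apply ENNReal.toReal_mono
          · exact ENNReal.add_ne_top.2 ⟨(vol_inter_lt_top A).ne, (vol_inter_lt_top B).ne⟩
          · rw [Set.union_inter_distrib_right]; exact measure_union_le _ _
      _ = _ := ENNReal.toReal_add (vol_inter_lt_top A).ne (vol_inter_lt_top B).ne

lemma nullD_biUnion {ι : Type*} (s : Finset ι) (A : ι → Set ℝ)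
    (h : ∀ i ∈ s, nullD (A i)) : nullD (⋃ i ∈ s, A i) := by
  classical
  induction s using Finset.induction_on with
  | empty => simpa using nullD_empty
  | @insert a s _ ih =>
    rw [Finset.set_biUnion_insert]
    exact nullD_union (h a (Finset.mem_insert_self a s))
      (ih fun i hi => h i (Finset.mem_insert_of_mem hi))

/-- complement (within `[0,∞)`) of a density-one measurable set is null -/
lemma nullD_of_disjoint_dens_one {G A : Set ℝ} (hG : MeasurableSet G)
    (hd : HasDens G 1) (hdisj : A ∩ G = ∅) (hA : A ⊆ Set.Ici 0) : nullD A := by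
  have hd' : Tendsto (fun T => 1 - rat G T) atTop (nhds 0) := by
    have : Tendsto (rat G) atTop (nhds 1) := hd
    simpa using (tendsto_const_nhds (x := (1:ℝ))).sub this
  refine squeeze_zero' ?_ ?_ hd'
  · filter_upwards [eventually_ge_atTop (0:ℝ)] with T hT using rat_nonneg hT
  · filter_upwards [eventually_gt_atTop (0:ℝ)] with T hT
    have key : (volume (A ∩ Set.Icc 0 T)).toReal ≤ T - (volume (G ∩ Set.Icc 0 T)).toReal := by
      have h1 : volume (Set.Icc 0 T ∩ G) + volume (Set.Icc 0 T \ G) = volume (Set.Icc 0 T) :=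
        measure_inter_add_diff _ hG
      have h2 : A ∩ Set.Icc 0 T ⊆ Set.Icc 0 T \ G := by
        rintro t ⟨htA, htI⟩
        exact ⟨htI, fun htG => Set.eq_empty_iff_forall_notMem.1 hdisj t ⟨htA, htG⟩⟩
      have h3 : (volume (A ∩ Set.Icc 0 T)).toReal ≤ (volume (Set.Icc 0 T \ G)).toReal := by
        apply ENNReal.toReal_mono ?_ (measure_mono h2)
        refine (lt_of_le_of_lt (measure_mono Set.diff_subset) ?_).ne
        rw [Real.volume_Icc]; exact ENNReal.ofReal_lt_top
      refine h3.trans ?_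
      have hfin1 : volume (Set.Icc 0 T ∩ G) ≠ ⊤ := by
        refine (lt_of_le_of_lt (measure_mono Set.inter_subset_left) ?_).ne
        rw [Real.volume_Icc]; exact ENNReal.ofReal_lt_top
      have hfin2 : volume (Set.Icc 0 T \ G) ≠ ⊤ := by
        refine (lt_of_le_of_lt (measure_mono Set.diff_subset) ?_).ne
        rw [Real.volume_Icc]; exact ENNReal.ofReal_lt_top
      have h4 := congrArg ENNReal.toReal h1
      rw [ENNReal.toReal_add hfin1 hfin2, Real.volume_Icc, sub_zero,
        ENNReal.toReal_ofReal hT.le] at h4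
      rw [Set.inter_comm G]
      linarith
    rw [rat, rat, div_le_iff₀ hT, sub_mul, one_mul, div_mul_cancel₀ _ hT.ne']
    exact key

/-- pushing visit times forward by `s`: if the shifted set is null, so was the original -/
lemma vol_image_shift (A : Set ℝ) (s : ℝ) : volume ((fun t => t + s) '' A) = volume A := by
  have : (fun t : ℝ => t + s) '' A = (fun h : ℝ => (-s) + h) ⁻¹' A := by
    ext x
    constructor
    · rintro ⟨t, ht, rfl⟩; simpa using ht
    · intro hx; exact ⟨(-s) + x, hx, by ring⟩
  rw [this, measure_preimage_add]

lemma nullD_of_image_shift {A A' : Set ℝ} {s : ℝ} (hs : 0 ≤ s)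
    (h : (fun t => t + s) '' A ⊆ A') (hA' : nullD A') : nullD A := by
  have key : ∀ T : ℝ, 0 ≤ T →
      (volume (A ∩ Set.Icc 0 T)).toReal ≤ (volume (A' ∩ Set.Icc 0 (T + s))).toReal := by
    intro T hT
    have h1 : (fun t : ℝ => t + s) '' (A ∩ Set.Icc 0 T) ⊆ A' ∩ Set.Icc 0 (T + s) := by
      rintro x ⟨t, ⟨htA, ht0, htT⟩, rfl⟩
      exact ⟨h ⟨t, htA, rfl⟩, by change (0:ℝ) ≤ t + s; linarith,
        by change t + s ≤ T + s; linarith⟩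
    calc (volume (A ∩ Set.Icc 0 T)).toReal
        = (volume ((fun t : ℝ => t + s) '' (A ∩ Set.Icc 0 T))).toReal := by
          rw [vol_image_shift]
      _ ≤ (volume (A' ∩ Set.Icc 0 (T + s))).toReal :=
          ENNReal.toReal_mono (vol_inter_lt_top A').ne (measure_mono h1)
  have lim : Tendsto (fun T : ℝ => rat A' (T + s) * ((T + s) / T)) atTop (nhds 0) := by
    have l1 : Tendsto (fun T : ℝ => rat A' (T + s)) atTop (nhds 0) :=
      hA'.comp (tendsto_atTop_add_const_right atTop s tendsto_id)
    have l2 : Tendsto (fun T : ℝ => (T + s) / T) atTop (nhds 1) := by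
      have : (fun T : ℝ => (T + s) / T) =ᶠ[atTop] fun T => 1 + s / T := by
        filter_upwards [eventually_ne_atTop (0:ℝ)] with T hT
        field_simp
      rw [tendsto_congr' this]
      simpa using (tendsto_const_nhds (x := (1:ℝ))).add
        ((tendsto_const_nhds (x := s)).div_atTop tendsto_id)
    simpa using l1.mul l2
  refine squeeze_zero' ?_ ?_ lim
  · filter_upwards [eventually_ge_atTop (0:ℝ)] with T hT using rat_nonneg hT
  · filter_upwards [eventually_gt_atTop (0:ℝ)] with T hT
    have hTs : (0:ℝ) < T + s := by linarith
    have e : rat A' (T+s) * ((T+s)/T) = (volume (A' ∩ Set.Icc 0 (T+s))).toReal / T := by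
      rw [rat]; field_simp
    rw [e, rat]
    exact div_le_div_of_nonneg_right (key T hT.le) hT.le

/-- if the pullback by the shift is null, so is the set itself -/
lemma nullD_of_preimage_shift {A : Set ℝ} {s : ℝ} (hs : 0 ≤ s)
    (h : nullD {t : ℝ | 0 ≤ t ∧ t + s ∈ A}) : nullD A := by
  set B := {t : ℝ | 0 ≤ t ∧ t + s ∈ A} with hB
  have key : ∀ T : ℝ, s ≤ T →
      (volume (A ∩ Set.Icc 0 T)).toReal ≤ s + (volume (B ∩ Set.Icc 0 (T - s))).toReal := by
    intro T hT
    have h1 : A ∩ Set.Icc 0 T ⊆ Set.Icc 0 s ∪ ((fun t : ℝ => t + s) '' (B ∩ Set.Icc 0 (T - s))) := by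
      rintro t ⟨htA, ht0, htT⟩
      rcases le_or_gt t s with hc | hc
      · exact Or.inl ⟨ht0, hc⟩
      · refine Or.inr ⟨t - s, ⟨⟨by linarith, by show t - s + s ∈ A; rw [sub_add_cancel]; exact htA⟩,
          by constructor <;> linarith⟩, by show t - s + s = t; ring⟩
    have h2 : volume (A ∩ Set.Icc 0 T)
        ≤ ENNReal.ofReal s + volume (B ∩ Set.Icc 0 (T - s)) := by
      calc volume (A ∩ Set.Icc 0 T) ≤ volume (Set.Icc 0 s)
            + volume ((fun t : ℝ => t + s) '' (B ∩ Set.Icc 0 (T - s))) :=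
          le_trans (measure_mono h1) (measure_union_le _ _)
        _ = ENNReal.ofReal s + volume (B ∩ Set.Icc 0 (T - s)) := by
          rw [Real.volume_Icc, sub_zero, vol_image_shift]
    calc (volume (A ∩ Set.Icc 0 T)).toReal
        ≤ (ENNReal.ofReal s + volume (B ∩ Set.Icc 0 (T - s))).toReal :=
          ENNReal.toReal_mono
            (ENNReal.add_ne_top.2 ⟨ENNReal.ofReal_ne_top, (vol_inter_lt_top B).ne⟩) h2
      _ = s + (volume (B ∩ Set.Icc 0 (T - s))).toReal := by
          rw [ENNReal.toReal_add ENNReal.ofReal_ne_top (vol_inter_lt_top B).ne,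
            ENNReal.toReal_ofReal hs]
  have lim : Tendsto (fun T : ℝ => s / T + rat B (T - s)) atTop (nhds 0) := by
    have l1 : Tendsto (fun T : ℝ => rat B (T - s)) atTop (nhds 0) :=
      h.comp (tendsto_atTop_add_const_right atTop (-s) tendsto_id)
    simpa using ((tendsto_const_nhds (x := s)).div_atTop tendsto_id).add l1
  refine squeeze_zero' ?_ ?_ lim
  · filter_upwards [eventually_ge_atTop (0:ℝ)] with T hT using rat_nonneg hT
  · filter_upwards [eventually_ge_atTop (max (s+1) 1)] with T hT
    have hT1 : (1:ℝ) ≤ T := le_trans (le_max_right _ _) hT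
    have hTs : s + 1 ≤ T := le_trans (le_max_left _ _) hT
    have hT0 : (0:ℝ) < T := by linarith
    have hTs' : (0:ℝ) < T - s := by linarith
    rw [rat]
    rw [div_le_iff₀ hT0, add_mul, div_mul_cancel₀ _ hT0.ne']
    calc (volume (A ∩ Set.Icc 0 T)).toReal ≤ s + (volume (B ∩ Set.Icc 0 (T - s))).toReal :=
          key T (by linarith)
      _ ≤ s + rat B (T - s) * T := by
          have : (volume (B ∩ Set.Icc 0 (T - s))).toReal = rat B (T-s) * (T - s) := by
            rw [rat, div_mul_cancel₀]; exact hTs'.ne'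
          rw [this]
          have : rat B (T - s) * (T - s) ≤ rat B (T - s) * T :=
            mul_le_mul_of_nonneg_left (by linarith) (rat_nonneg hTs'.le)
          linarith

section Semiflow

variable {f : ℝ → X → X}

lemma motion_continuous (hf : IsSemiflow f) (x : X) :
    Continuous (fun t : ℝ => f (max t 0) x) := by
  have : (fun t : ℝ => f (max t 0) x)
      = (fun p : ℝ × X => f p.1 p.2) ∘ (fun t : ℝ => (max t 0, x)) := rfl
  rw [this]
  exact hf.1.comp_continuous ((continuous_id.max continuous_const).prodMk continuous_const)
    (fun t => ⟨Set.mem_Ici.2 (le_max_right t 0), Set.mem_univ _⟩)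

lemma map_continuous (hf : IsSemiflow f) {t : ℝ} (ht : 0 ≤ t) : Continuous (f t) := by
  have : f t = (fun p : ℝ × X => f p.1 p.2) ∘ (fun x : X => (t, x)) := rfl
  rw [this]
  exact hf.1.comp_continuous (continuous_const.prodMk continuous_id)
    (fun x => ⟨ht, Set.mem_univ _⟩)

lemma vis_measurable (hf : IsSemiflow f) (y : X) {U : Set X} (hU : IsOpen U) :
    MeasurableSet (vis f y U) := by
  have : vis f y U = Set.Ici 0 ∩ (fun t : ℝ => f (max t 0) y) ⁻¹' U := by
    ext t
    constructor
    · rintro ⟨ht, hmem⟩; exact ⟨ht, by rwa [Set.mem_preimage, max_eq_left ht]⟩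
    · rintro ⟨ht, hmem⟩
      exact ⟨ht, by rwa [Set.mem_preimage, max_eq_left ht] at hmem⟩
  rw [this]
  exact measurableSet_Ici.inter
    ((hU.preimage (motion_continuous hf y)).measurableSet)

lemma isClosed_Dset (f : ℝ → X → X) (y : X) : IsClosed (Dset f y) := by
  rw [← isOpen_compl_iff, Metric.isOpen_iff]
  intro x hx
  have : ¬ (∀ ε > (0:ℝ), ¬ nullD (vis f y (ball x ε))) := hx
  push_neg at this
  obtain ⟨ε, εpos, hnull⟩ := this
  refine ⟨ε/2, by linarith, fun z hz hzD => ?_⟩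
  refine hzD (ε/2) (by linarith) (nullD_mono ?_ hnull)
  rintro t ⟨ht, hmem⟩
  refine ⟨ht, ?_⟩
  calc dist (f t y) x ≤ dist (f t y) z + dist z x := dist_triangle _ _ _
    _ < ε/2 + ε/2 := add_lt_add hmem hz
    _ = ε := by ring

lemma Dset_subset_closure_orb (f : ℝ → X → X) (y : X) : Dset f y ⊆ closure (orb f y) := by
  intro x hx
  by_contra hmem
  obtain ⟨ε, εpos, hb⟩ : ∃ ε > (0:ℝ), ball x ε ∩ orb f y = ∅ := by
    obtain ⟨ε, εpos, hball⟩ := Metric.isOpen_iff.1 isClosed_closure.isOpen_compl x hmem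
    refine ⟨ε, εpos, Set.eq_empty_iff_forall_notMem.2 ?_⟩
    rintro z ⟨hz1, hz2⟩
    exact (hball hz1) (subset_closure hz2)
  refine hx ε εpos ?_
  have : vis f y (ball x ε) = ∅ := by
    rw [Set.eq_empty_iff_forall_notMem]
    rintro t ⟨ht, hmem'⟩
    exact Set.eq_empty_iff_forall_notMem.1 hb (f t y) ⟨hmem', ⟨t, ht, rfl⟩⟩
  rw [this]; exact nullD_empty

lemma hasDens_one_nonempty {g : ℝ → X → X} {y : X} {C : Set X}
    (hd : HasDens {t : ℝ | 0 ≤ t ∧ g t y ∈ Metric.thickening 1 C} 1) : C.Nonempty := by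
  rcases C.eq_empty_or_nonempty with rfl | h
  · exfalso
    have h0 : {t : ℝ | 0 ≤ t ∧ g t y ∈ Metric.thickening 1 (∅ : Set X)} = ∅ := by
      simp [Metric.thickening_empty]
    rw [h0] at hd
    have h1 : Tendsto (rat (∅ : Set ℝ)) atTop (nhds 1) := hd
    have := tendsto_nhds_unique h1 nullD_empty
    norm_num at this
  · exact h

lemma Dset_subset_ctr (hf : IsSemiflow f) {y : X} {C : Set X} (hC : IsCtr f y C) :
    Dset f y ⊆ C := by
  intro x hx
  by_contra hmem
  have hCne : C.Nonempty := hasDens_one_nonempty (hC.2 1 one_pos)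
  have hpos : 0 < infDist x C := by
    rwa [← hC.1.notMem_iff_infDist_pos hCne]
  set ε := infDist x C with hε
  refine hx (ε/2) (by linarith) ?_
  refine nullD_of_disjoint_dens_one
    (vis_measurable hf y (Metric.isOpen_thickening (δ := ε/2) (E := C))) (hC.2 (ε/2) (by linarith))
    ?_ (fun t ht => ht.1)
  rw [Set.eq_empty_iff_forall_notMem]
  rintro t ⟨⟨ht, hb⟩, ⟨ht', hth⟩⟩
  obtain ⟨c, hcC, hc⟩ := Metric.mem_thickening_iff.1 hth
  have : infDist x C ≤ dist x c := infDist_le_dist_of_mem hcC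
  have hxy : dist x (f t y) < ε/2 := by rw [dist_comm]; exact mem_ball.1 hb
  have : dist x c ≤ dist x (f t y) + dist (f t y) c := dist_triangle _ _ _
  linarith

lemma isCtr_Dset (hf : IsSemiflow f) {y : X} (hy : IsCompact (closure (orb f y))) :
    IsCtr f y (Dset f y) := by
  refine ⟨isClosed_Dset f y, fun ε εpos => ?_⟩
  set D := Dset f y with hD
  set K := closure (orb f y) \ Metric.thickening ε D with hK
  have hKcomp : IsCompact K := hy.of_isClosed_subset
    (isClosed_closure.inter (Metric.isOpen_thickening.isClosed_compl)) Set.diff_subset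
  -- every point of K has a null ball
  have hballs : ∀ x ∈ K, ∃ r > (0:ℝ), nullD (vis f y (ball x r)) := by
    intro x hxK
    have hxD : x ∉ D := fun hxD => hxK.2 (Metric.self_subset_thickening εpos D hxD)
    have : ¬ (∀ r > (0:ℝ), ¬ nullD (vis f y (ball x r))) := hxD
    push_neg at this
    exact this
  choose! r rpos rnull using hballs
  obtain ⟨b, hbK, hbfin, hcov⟩ := hKcomp.elim_finite_subcover_image
    (fun x hx => isOpen_ball (x := x) (ε := r x))
    (fun x hx => Set.mem_biUnion hx (mem_ball_self (rpos x hx)))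
  set N := ⋃ x ∈ hbfin.toFinset, vis f y (ball x (r x)) with hN
  have hNnull : nullD N := by
    refine nullD_biUnion _ _ fun x hx => ?_
    have hxb : x ∈ b := hbfin.mem_toFinset.1 hx
    exact rnull x (hbK hxb)
  have hsub : ∀ T : ℝ, Set.Icc 0 T ⊆ (vis f y (Metric.thickening ε D) ∪ N) := by
    intro T t ⟨ht0, htT⟩
    by_cases hc : f t y ∈ Metric.thickening ε D
    · exact Or.inl ⟨ht0, hc⟩
    · have : f t y ∈ K := ⟨subset_closure ⟨t, ht0, rfl⟩, hc⟩
      obtain ⟨x, hxb, hxball⟩ := Set.mem_iUnion₂.1 (hcov this)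
      exact Or.inr (Set.mem_iUnion₂.2 ⟨x, hbfin.mem_toFinset.2 hxb, ht0, hxball⟩)
  have lower : ∀ T : ℝ, 0 < T → 1 - rat N T ≤ rat (vis f y (Metric.thickening ε D)) T := by
    intro T hT
    have h1 : volume (Set.Icc 0 T)
        ≤ volume (vis f y (Metric.thickening ε D) ∩ Set.Icc 0 T)
          + volume (N ∩ Set.Icc 0 T) := by
      calc volume (Set.Icc 0 T)
          = volume ((vis f y (Metric.thickening ε D) ∪ N) ∩ Set.Icc 0 T) := by
            rw [Set.inter_eq_right.2 (hsub T)]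
        _ ≤ _ := by rw [Set.union_inter_distrib_right]; exact measure_union_le _ _
    have h2 : T ≤ (volume (vis f y (Metric.thickening ε D) ∩ Set.Icc 0 T)).toReal
        + (volume (N ∩ Set.Icc 0 T)).toReal := by
      have := ENNReal.toReal_mono
        (ENNReal.add_ne_top.2 ⟨(vol_inter_lt_top _).ne, (vol_inter_lt_top _).ne⟩) h1
      rwa [Real.volume_Icc, sub_zero, ENNReal.toReal_ofReal hT.le,
        ENNReal.toReal_add (vol_inter_lt_top _).ne (vol_inter_lt_top _).ne] at this
    rw [rat, rat, sub_le_iff_le_add, ← add_div, le_div_iff₀ hT, one_mul]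
    linarith [h2]
  have : Tendsto (rat (vis f y (Metric.thickening ε D))) atTop (nhds 1) := by
    refine tendsto_of_tendsto_of_tendsto_of_le_of_le'
      (g := fun T => 1 - rat N T) (h := fun _ => (1:ℝ)) ?_ tendsto_const_nhds ?_ ?_
    · simpa using (tendsto_const_nhds (x := (1:ℝ))).sub hNnull
    · filter_upwards [eventually_gt_atTop (0:ℝ)] with T hT using lower T hT
    · filter_upwards [eventually_gt_atTop (0:ℝ)] with T hT using rat_le_one hT
  exact this

lemma Dset_invariant (hf : IsSemiflow f) (y : X) {s : ℝ} (hs : 0 ≤ s) :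
    ∀ x ∈ Dset f y, f s x ∈ Dset f y := by
  intro x hx ε εpos hnull
  obtain ⟨δ, δpos, hδ⟩ := Metric.continuousAt_iff.1 (map_continuous hf hs).continuousAt ε εpos
  refine hx δ δpos (nullD_of_image_shift hs ?_ hnull)
  rintro u ⟨t, ⟨ht, hmem⟩, rfl⟩
  refine ⟨by change (0:ℝ) ≤ t + s; linarith, ?_⟩
  show f (t + s) y ∈ ball (f s x) ε
  have he : f s (f t y) = f (s + t) y := hf.2.2 s t hs ht y
  rw [add_comm t s, ← he]
  exact hδ hmem

lemma Dset_shift (hf : IsSemiflow f) (y : X) {s : ℝ} (hs : 0 ≤ s) :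
    Dset f y ⊆ Dset f (f s y) := by
  intro x hx ε εpos hnull
  refine hx ε εpos (nullD_of_preimage_shift hs ?_)
  have he : {t : ℝ | 0 ≤ t ∧ t + s ∈ vis f y (ball x ε)} = vis f (f s y) (ball x ε) := by
    ext t
    constructor
    · rintro ⟨ht, ⟨hts, hmem⟩⟩
      refine ⟨ht, ?_⟩
      show f t (f s y) ∈ ball x ε
      rw [hf.2.2 t s ht hs y]
      exact hmem
    · rintro ⟨ht, hmem⟩
      refine ⟨ht, ⟨by linarith, ?_⟩⟩
      show f (t + s) y ∈ ball x ε
      rw [← hf.2.2 t s ht hs y]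
      exact hmem
  rw [he]
  exact hnull

lemma Dset_eq_mca (hf : IsSemiflow f) {y : X} {C : Set X}
    (hy : IsCompact (closure (orb f y))) (hC : IsMCA f y C) : Dset f y = C :=
  hC.2 _ (Dset_subset_ctr hf hC.1) (isCtr_Dset hf hy)

end Semiflow


lemma proximal_point {f : ℝ → X → X} (hf : IsSemiflow f) {C Λ : Set X}
    (hCcomp : IsCompact C) (hCinv : FlowInvariant f C)
    (hΛsub : Λ ⊆ C) (hΛne : Λ.Nonempty) (hΛcl : IsClosed Λ) (hΛinv : FlowInvariant f Λ)
    (hz0 : ∃ z0 ∈ C, z0 ∉ Λ) {x : X} (hx : x ∈ C)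
    (hxdense : ∀ z ∈ C, ∀ ε > (0:ℝ), ∀ n : ℝ, ∃ t, n ≤ t ∧ 0 ≤ t ∧ dist (f t x) z < ε) :
    ∃ y ∈ Λ, ∀ ε > (0:ℝ), ∀ n : ℝ,
      ∃ t, n ≤ t ∧ 0 ≤ t ∧ dist (f t x) y < ε ∧ dist (f t y) y < ε := by
  classical
  haveI : CompactSpace (↥C) := isCompact_iff_compactSpace.mp hCcomp
  haveI : Nonempty (↥C) := ⟨⟨x, hx⟩⟩
  -- the semiflow maps, as selfmaps of C
  set φ : ℝ → ((↥C) → (↥C)) := fun t z => if h : 0 ≤ t then ⟨f t ↑z, hCinv t h ↑z z.2⟩ else z with hφ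
  have φ_apply : ∀ {t : ℝ}, 0 ≤ t → ∀ (z : ↥C), (φ t z : X) = f t ↑z := by
    intro t ht z; simp only [hφ, dif_pos ht]
  have φ_comp : ∀ {s t : ℝ}, 0 ≤ s → 0 ≤ t → φ s ∘ φ t = φ (s + t) := by
    intro s t hs ht
    funext z
    apply Subtype.ext
    show (φ s (φ t z) : X) = (φ (s+t) z : X)
    rw [φ_apply hs, φ_apply ht, φ_apply (by linarith)]
    exact hf.2.2 s t hs ht ↑z
  have φ_cont : ∀ {t : ℝ}, 0 ≤ t → Continuous (φ t) := by
    intro t ht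
    have : φ t = fun z : ↥C => (⟨f t ↑z, hCinv t ht ↑z z.2⟩ : ↥C) := by
      funext z; apply Subtype.ext; rw [φ_apply ht]
    rw [this]
    exact ((map_continuous hf ht).comp continuous_subtype_val).subtype_mk _
  set gens : ℝ → Set ((↥C) → (↥C)) := fun n => {g | ∃ t, n ≤ t ∧ 0 ≤ t ∧ φ t = g} with hgens
  set E : Set ((↥C) → (↥C)) := closure (gens 0) with hE
  have hEcomp : IsCompact E := isClosed_closure.isCompact
  -- E is closed under composition
  have hmul1 : ∀ t, 0 ≤ t → ∀ h ∈ E, φ t ∘ h ∈ E := by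
    intro t ht h hh
    have hcont : Continuous fun g : (↥C) → (↥C) => φ t ∘ g :=
      continuous_pi fun z => (φ_cont ht).comp (continuous_apply z)
    have : gens 0 ⊆ (fun g : (↥C) → (↥C) => φ t ∘ g) ⁻¹' E := by
      rintro g ⟨s, -, hs, rfl⟩
      exact subset_closure ⟨t + s, by linarith, by linarith, (φ_comp ht hs).symm⟩
    exact closure_minimal this (isClosed_closure.preimage hcont) hh
  have hmul : ∀ g ∈ E, ∀ h ∈ E, g ∘ h ∈ E := by
    intro g hg h hh
    have hcont : Continuous fun g' : (↥C) → (↥C) => g' ∘ h :=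
      continuous_pi fun z => continuous_apply (h z)
    have : gens 0 ⊆ (fun g' : (↥C) → (↥C) => g' ∘ h) ⁻¹' E := by
      rintro g' ⟨s, -, hs, rfl⟩
      exact hmul1 s hs h hh
    exact closure_minimal this (isClosed_closure.preimage hcont) hg
  -- find u ∈ E with u x' = lam0'
  obtain ⟨lam0, hlam0⟩ := hΛne
  set x' : ↥C := ⟨x, hx⟩ with hx'
  set lam0' : ↥C := ⟨lam0, hΛsub hlam0⟩ with hlam0'
  have hEx : ∃ u ∈ E, u x' = lam0' := by
    have hA : IsCompact ((fun g : (↥C) → (↥C) => g x') '' E) :=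
      hEcomp.image (continuous_apply x')
    have hmem : lam0' ∈ (fun g : (↥C) → (↥C) => g x') '' E := by
      have hsub : {z : ↥C | ∃ t, 0 ≤ t ∧ φ t x' = z} ⊆ (fun g : (↥C) → (↥C) => g x') '' E := by
        rintro z ⟨t, ht, rfl⟩
        exact ⟨φ t, subset_closure ⟨t, ht, ht, rfl⟩, rfl⟩
      have hcl : lam0' ∈ closure {z : ↥C | ∃ t, 0 ≤ t ∧ φ t x' = z} := by
        rw [Metric.mem_closure_iff]
        intro ε εpos
        obtain ⟨t, -, ht0, hdist⟩ := hxdense lam0 (hΛsub hlam0) ε εpos 0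
        refine ⟨φ t x', ⟨t, ht0, rfl⟩, ?_⟩
        rw [Subtype.dist_eq]
        rw [φ_apply ht0]
        rw [dist_comm]
        exact hdist
      exact closure_minimal hsub hA.isClosed hcl
    obtain ⟨u, hu, hux⟩ := hmem
    exact ⟨u, hu, hux⟩
  obtain ⟨u, huE, hux⟩ := hEx
  -- the left ideal L = E ∘ u, and an idempotent v in it
  set L : Set ((↥C) → (↥C)) := (fun g : (↥C) → (↥C) => g ∘ u) '' E with hL
  have hLcomp : IsCompact L := hEcomp.image (continuous_pi fun z => continuous_apply (u z))
  have hLne : L.Nonempty := ⟨u ∘ u, ⟨u, huE, rfl⟩⟩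
  have hLE : L ⊆ E := by rintro g ⟨h, hh, rfl⟩; exact hmul h hh u huE
  letI : Mul ((↥C) → (↥C)) := ⟨fun a b => a ∘ b⟩
  letI : Semigroup ((↥C) → (↥C)) := { mul_assoc := fun a b c => rfl }
  have hidem : ∃ v ∈ L, v * v = v := by
    apply exists_idempotent_in_compact_subsemigroup ?_ L hLne hLcomp ?_
    · intro r
      exact continuous_pi fun z => continuous_apply (r z)
    · rintro a ⟨g, hg, rfl⟩ b ⟨h, hh, rfl⟩
      exact ⟨(g ∘ u) ∘ h, hmul _ (hmul g hg u huE) h hh, rfl⟩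
  obtain ⟨v, hvL, hvv⟩ := hidem
  have hvE : v ∈ E := hLE hvL
  -- y := v x' lies in Λ
  set y' : ↥C := v x' with hy'
  have hyΛ : (y' : X) ∈ Λ := by
    obtain ⟨g, hgE, rfl⟩ := hvL
    have hW : E ⊆ {w : (↥C) → (↥C) | (w lam0' : X) ∈ Λ} := by
      have hWcl : IsClosed {w : (↥C) → (↥C) | (w lam0' : X) ∈ Λ} :=
        hΛcl.preimage (continuous_subtype_val.comp (continuous_apply lam0'))
      refine closure_minimal ?_ hWcl
      rintro w ⟨t, -, ht, rfl⟩
      show (φ t lam0' : X) ∈ Λ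
      rw [φ_apply ht]
      exact hΛinv t ht lam0 hlam0
    have : ((g ∘ u) x' : X) = (g lam0' : X) := by rw [Function.comp_apply, hux]
    rw [hy', this]
    exact hW hgE
  have hvy : v y' = y' := by
    have h := congrFun hvv x'
    exact h
  -- dichotomy
  have hdich : ∀ n : ℝ, v ∈ closure (gens n) ∨ ∃ s, 0 ≤ s ∧ s ≤ max n 0 ∧ v = φ s := by
    intro n
    set n' := max n 0 with hn'
    have hn'0 : 0 ≤ n' := le_max_right n 0
    set A : Set ((↥C) → (↥C)) := φ '' Set.Icc 0 n' with hA
    have hAcomp : IsCompact A := by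
      apply isCompact_Icc.image_of_continuousOn
      have hg : Continuous (fun t : ℝ => fun z : ↥C => (⟨f (max t 0) ↑z,
          hCinv (max t 0) (le_max_right t 0) ↑z z.2⟩ : ↥C)) := by
        apply continuous_pi
        intro z
        exact ((motion_continuous hf ↑z).subtype_mk _)
      refine hg.continuousOn.congr ?_
      intro t ht
      obtain ⟨ht0, htn⟩ := ht
      funext z
      apply Subtype.ext
      show (φ t z : X) = f (max t 0) ↑z
      rw [φ_apply ht0, max_eq_left ht0]
    have hsplit : gens 0 ⊆ A ∪ gens n' := by
      rintro g ⟨t, -, ht, rfl⟩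
      rcases le_or_gt t n' with hc | hc
      · exact Or.inl ⟨t, ⟨ht, hc⟩, rfl⟩
      · exact Or.inr ⟨t, hc.le, ht, rfl⟩
    have hvmem : v ∈ A ∪ closure (gens n') := by
      have : E ⊆ closure (A ∪ gens n') := closure_mono hsplit
      have h2 : closure (A ∪ gens n') = A ∪ closure (gens n') := by
        rw [closure_union, hAcomp.isClosed.closure_eq]
      rw [h2] at this
      exact this hvE
    rcases hvmem with hc | hc
    · obtain ⟨s, ⟨hs0, hsn⟩, rfl⟩ := hc
      exact Or.inr ⟨s, hs0, hsn, rfl⟩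
    · refine Or.inl ?_
      have : closure (gens n') ⊆ closure (gens n) :=
        closure_mono (fun g ⟨t, htn, ht0, hgt⟩ => ⟨t, (le_max_left n 0).trans htn, ht0, hgt⟩)
      exact this hc
  -- the degenerate case is impossible
  have hnotdeg : ¬ ∃ s, 0 ≤ s ∧ f s x ∈ Λ := by
    rintro ⟨s, hs0, hsx⟩
    obtain ⟨z0, hz0C, hz0Λ⟩ := hz0
    have hε0 : 0 < infDist z0 Λ :=
      (hΛcl.notMem_iff_infDist_pos ⟨lam0, hlam0⟩).1 hz0Λ
    obtain ⟨t, hts, ht0, hdist⟩ := hxdense z0 hz0C (infDist z0 Λ) hε0 s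
    have htΛ : f t x ∈ Λ := by
      have : f (t - s) (f s x) = f t x := by
        rw [hf.2.2 (t - s) s (by linarith) hs0, sub_add_cancel]
      rw [← this]
      exact hΛinv (t - s) (by linarith) _ hsx
    have : infDist z0 Λ ≤ dist z0 (f t x) := infDist_le_dist_of_mem htΛ
    rw [dist_comm] at this
    linarith
  -- hence v is a limit of arbitrarily late time-t maps
  refine ⟨(y' : X), hyΛ, ?_⟩
  intro ε εpos n
  rcases hdich n with hv | ⟨s, hs0, _, rfl⟩
  · have hcx : Continuous (fun w : (↥C) → (↥C) => w x') := continuous_apply x'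
    have hcy : Continuous (fun w : (↥C) → (↥C) => w y') := continuous_apply y'
    have hopen : IsOpen {w : (↥C) → (↥C) | w x' ∈ ball y' ε ∧ w y' ∈ ball y' ε} :=
      IsOpen.inter (isOpen_ball.preimage hcx) (isOpen_ball.preimage hcy)
    have hvmem : v ∈ {w : (↥C) → (↥C) | w x' ∈ ball y' ε ∧ w y' ∈ ball y' ε} := by
      constructor
      · show v x' ∈ ball y' ε; rw [← hy']; exact mem_ball_self εpos
      · show v y' ∈ ball y' ε
        rw [hvy]; exact mem_ball_self εpos
    obtain ⟨g, hgmem, hggen⟩ := _root_.mem_closure_iff.1 hv _ hopen hvmem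
    obtain ⟨t, htn, ht0, rfl⟩ := hggen
    refine ⟨t, htn, ht0, ?_, ?_⟩
    · have := hgmem.1
      rw [mem_ball, Subtype.dist_eq, φ_apply ht0] at this
      exact this
    · have := hgmem.2
      rw [mem_ball, Subtype.dist_eq, φ_apply ht0] at this
      exact this
  · exfalso
    apply hnotdeg
    refine ⟨s, hs0, ?_⟩
    have : (φ s x' : X) = f s x := φ_apply hs0 x'
    rw [← this]
    exact hyΛ

end GenChaos


open GenChaos

theorem generic_chaotic {X : Type*} [MetricSpace X]
    [TopologicalSpace.SeparableSpace X] [CompleteSpace X]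
    (f : ℝ → X → X) (hf : IsSemiflow f) (p : X)
    (horb : IsCompact (closure {y : X | ∃ t : ℝ, 0 ≤ t ∧ f t p = y}))
    (C : Set X) (hC : IsMCA f p C)
    (hgen : ∃ q ∈ C, IsMCA f q C) (hnm : ¬ IsMinimalSet f C) :
    ∃ S : Set C, S ∈ residual C ∧
      ∀ x ∈ S, ∀ Λ ⊆ C, IsMinimalSet f Λ →
        ∃ y ∈ Λ,
          Filter.liminf (fun t : ℝ => dist (f t (x : X)) (f t y)) Filter.atTop = 0 ∧
          0 < Filter.limsup (fun t : ℝ => dist (f t (x : X)) (f t y)) Filter.atTop ∧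
          Filter.liminf (fun t : ℝ => dist (f t (x : X)) y) Filter.atTop = 0 ∧
          Metric.diam C / 2 ≤
            Filter.limsup (fun t : ℝ => dist (f t (x : X)) y) Filter.atTop := by
  classical
  obtain ⟨q, hqC, hq⟩ := hgen
  have horb' : IsCompact (closure (orb f p)) := horb
  have hCD : Dset f p = C := Dset_eq_mca hf horb' hC
  have hCclosed : IsClosed C := hC.1.1
  have hCsubO : C ⊆ closure (orb f p) := hCD ▸ Dset_subset_closure_orb f p
  have hCcomp : IsCompact C := horb'.of_isClosed_subset hCclosed hCsubO
  have hCinv : FlowInvariant f C := by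
    intro t ht z hz
    rw [← hCD] at hz ⊢
    exact Dset_invariant hf p ht z hz
  have horbq : closure (orb f q) ⊆ C := by
    refine closure_minimal ?_ hCclosed
    rintro z ⟨t, ht, rfl⟩
    exact hCinv t ht q hqC
  have hOq : IsCompact (closure (orb f q)) :=
    hCcomp.of_isClosed_subset isClosed_closure horbq
  have hqD : Dset f q = C := Dset_eq_mca hf hOq hq
  have hCq : C ⊆ closure (orb f q) := hqD ▸ Dset_subset_closure_orb f q
  have hdense : ∀ s : ℝ, 0 ≤ s → C ⊆ closure (orb f (f s q)) := by
    intro s hs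
    rw [← hqD]
    exact (Dset_shift hf q hs).trans (Dset_subset_closure_orb f (f s q))
  -- countable basis
  haveI : SecondCountableTopology X := UniformSpace.secondCountable_of_separable X
  obtain ⟨b, hbcount, hbne, hbasis⟩ := TopologicalSpace.exists_countable_basis X
  set I := {U : Set X | U ∈ b ∧ (U ∩ C).Nonempty} with hI
  haveI : Countable ↥I := (hbcount.mono (fun U hU => hU.1)).to_subtype
  set G : ↥I → ℕ → Set ↥C :=
    fun U n => {z : ↥C | ∃ t : ℝ, (n:ℝ) ≤ t ∧ 0 ≤ t ∧ f t ↑z ∈ (U : Set X)} with hG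
  have hGopen : ∀ U n, IsOpen (G U n) := by
    intro U n
    have : G U n = ⋃ t : {t : ℝ // (n:ℝ) ≤ t ∧ 0 ≤ t},
        (fun z : ↥C => f ↑t ↑z) ⁻¹' (U : Set X) := by
      ext z
      simp only [Set.mem_iUnion, Set.mem_preimage, Set.mem_setOf_eq, Subtype.exists]
      constructor
      · rintro ⟨t, h1, h2, h3⟩; exact ⟨t, ⟨h1, h2⟩, h3⟩
      · rintro ⟨t, ⟨h1, h2⟩, h3⟩; exact ⟨t, h1, h2, h3⟩
    rw [this]
    refine isOpen_iUnion fun t => ?_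
    exact (hbasis.isOpen U.2.1).preimage
      ((map_continuous hf t.2.2).comp continuous_subtype_val)
  have hGdense : ∀ U n, Dense (G U n) := by
    intro U n
    rw [dense_iff_inter_open]
    rintro O hO ⟨z0, hz0O⟩
    obtain ⟨V, hVopen, hVeq⟩ := isOpen_induced_iff.1 hO
    have hz0V : (z0 : X) ∈ V := by rw [← hVeq] at hz0O; exact hz0O
    -- find an orbit point of q inside V
    have hz0cl : (z0 : X) ∈ closure (orb f q) := hCq z0.2
    obtain ⟨w, hwV, hworb⟩ := _root_.mem_closure_iff.1 hz0cl V hVopen hz0V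
    obtain ⟨s, hs0, rfl⟩ := hworb
    have hsqC : f s q ∈ C := hCinv s hs0 q hqC
    -- find a later time sending it into U
    obtain ⟨c, hcU, hcC⟩ := U.2.2
    have hccl : c ∈ closure (orb f (f (s + n) q)) := hdense (s + n) (by positivity) hcC
    obtain ⟨w', hw'U, hw'orb⟩ :=
      _root_.mem_closure_iff.1 hccl (U : Set X) (hbasis.isOpen U.2.1) hcU
    obtain ⟨r, hr0, hw'⟩ := hw'orb
    refine ⟨⟨f s q, hsqC⟩, ?_, ?_⟩
    · rw [← hVeq]; exact hwV
    · refine ⟨r + n, by linarith, by positivity, ?_⟩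
      show f (r + n) (f s q) ∈ (U : Set X)
      have e1 : f (r + n) (f s q) = f ((r + n) + s) q := hf.2.2 (r + n) s (by positivity) hs0 q
      have e2 : f r (f (s + n) q) = f (r + (s + n)) q := hf.2.2 r (s + n) hr0 (by positivity) q
      have e3 : (r + n) + s = r + (s + n) := by ring
      rw [e1, e3, ← e2, hw']
      exact hw'U
  refine ⟨⋂ (U : ↥I) (n : ℕ), G U n, ?_, ?_⟩
  · rw [countable_iInter_mem]
    intro U
    rw [countable_iInter_mem]
    intro n
    exact residual_of_dense_open (hGopen U n) (hGdense U n)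
  · intro x hxS Λ hΛsub hΛmin
    obtain ⟨hΛne, hΛcl, hΛinv, -⟩ := id hΛmin
    have hΛneq : Λ ≠ C := fun h => hnm (h ▸ hΛmin)
    have hz0 : ∃ z0 ∈ C, z0 ∉ Λ := by
      obtain ⟨z0, hz0⟩ := Set.exists_of_ssubset (ssubset_of_subset_of_ne hΛsub hΛneq)
      exact ⟨z0, hz0.1, hz0.2⟩
    have hxdense : ∀ z ∈ C, ∀ ε > (0:ℝ), ∀ n : ℝ,
        ∃ t, n ≤ t ∧ 0 ≤ t ∧ dist (f t (x:X)) z < ε := by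
      intro z hzC ε εpos n
      obtain ⟨U, hUb, hzU, hUsub⟩ :=
        hbasis.exists_subset_of_mem_open (mem_ball_self εpos) isOpen_ball
      obtain ⟨m, hm⟩ := exists_nat_ge n
      have hUI : U ∈ I := ⟨hUb, ⟨z, hzU, hzC⟩⟩
      have hx' := Set.mem_iInter.1 (Set.mem_iInter.1 hxS ⟨U, hUI⟩) m
      obtain ⟨t, htm, ht0, htU⟩ := hx'
      exact ⟨t, le_trans hm htm, ht0, mem_ball.1 (hUsub htU)⟩
    obtain ⟨y, hyΛ, hy⟩ := proximal_point hf hCcomp hCinv hΛsub hΛne hΛcl hΛinv hz0 x.2 hxdense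
    have hyC : y ∈ C := hΛsub hyΛ
    have hmemx : ∀ t : ℝ, 0 ≤ t → f t (x:X) ∈ C := fun t ht => hCinv t ht (x:X) x.2
    have hmemy : ∀ t : ℝ, 0 ≤ t → f t y ∈ C := fun t ht => hCinv t ht y hyC
    have hbdd1 : IsBoundedUnder (· ≤ ·) atTop (fun t : ℝ => dist (f t (x:X)) (f t y)) := by
      refine ⟨Metric.diam C, eventually_map.2 ?_⟩
      filter_upwards [eventually_ge_atTop (0:ℝ)] with t ht
      exact Metric.dist_le_diam_of_mem hCcomp.isBounded (hmemx t ht) (hmemy t ht)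
    have hbdd2 : IsBoundedUnder (· ≤ ·) atTop (fun t : ℝ => dist (f t (x:X)) y) := by
      refine ⟨Metric.diam C, eventually_map.2 ?_⟩
      filter_upwards [eventually_ge_atTop (0:ℝ)] with t ht
      exact Metric.dist_le_diam_of_mem hCcomp.isBounded (hmemx t ht) hyC
    have hlow1 : IsBoundedUnder (· ≥ ·) atTop (fun t : ℝ => dist (f t (x:X)) (f t y)) :=
      ⟨0, eventually_map.2 (Eventually.of_forall fun t => dist_nonneg)⟩
    have hlow2 : IsBoundedUnder (· ≥ ·) atTop (fun t : ℝ => dist (f t (x:X)) y) :=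
      ⟨0, eventually_map.2 (Eventually.of_forall fun t => dist_nonneg)⟩
    refine ⟨y, hyΛ, ?_, ?_, ?_, ?_⟩
    · -- liminf dist (f t x) (f t y) = 0
      refine le_antisymm ?_ ?_
      · have hle : ∀ ε > (0:ℝ),
            liminf (fun t : ℝ => dist (f t (x:X)) (f t y)) atTop ≤ ε := by
          intro ε εpos
          refine liminf_le_of_frequently_le ?_ hlow1
          rw [frequently_atTop]
          intro n
          obtain ⟨t, htn, ht0, h1, h2⟩ := hy (ε/2) (half_pos εpos) n
          refine ⟨t, htn, ?_⟩
          calc dist (f t (x:X)) (f t y) ≤ dist (f t (x:X)) y + dist y (f t y) :=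
                dist_triangle _ _ _
            _ ≤ ε/2 + ε/2 := by rw [dist_comm y (f t y)]; exact add_le_add h1.le h2.le
            _ = ε := by ring
        by_contra hne
        push_neg at hne
        have := hle _ (half_pos hne)
        linarith
      · exact le_liminf_of_le (hbdd1.isCoboundedUnder_ge)
          (Eventually.of_forall fun t => dist_nonneg)
    · -- 0 < limsup dist (f t x) (f t y)
      obtain ⟨z0, hz0C, hz0Λ⟩ := hz0
      have hε0 : 0 < infDist z0 Λ := (hΛcl.notMem_iff_infDist_pos hΛne).1 hz0Λ
      have hfreq : ∃ᶠ t in atTop, infDist z0 Λ / 2 ≤ dist (f t (x:X)) (f t y) := by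
        rw [frequently_atTop]
        intro n
        obtain ⟨t, htn, ht0, hd⟩ := hxdense z0 hz0C (infDist z0 Λ / 2) (half_pos hε0) n
        refine ⟨t, htn, ?_⟩
        have h1 : f t y ∈ Λ := hΛinv t ht0 y hyΛ
        have h2 : infDist z0 Λ ≤ dist z0 (f t y) := infDist_le_dist_of_mem h1
        have h3 : dist z0 (f t y) ≤ dist z0 (f t (x:X)) + dist (f t (x:X)) (f t y) :=
          dist_triangle _ _ _
        rw [dist_comm z0 (f t (x:X))] at h3
        linarith
      have := le_limsup_of_frequently_le hfreq hbdd1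
      linarith
    · -- liminf dist (f t x) y = 0
      refine le_antisymm ?_ ?_
      · have hle : ∀ ε > (0:ℝ), liminf (fun t : ℝ => dist (f t (x:X)) y) atTop ≤ ε := by
          intro ε εpos
          refine liminf_le_of_frequently_le ?_ hlow2
          rw [frequently_atTop]
          intro n
          obtain ⟨t, htn, ht0, hd⟩ := hxdense y hyC ε εpos n
          exact ⟨t, htn, hd.le⟩
        by_contra hne
        push_neg at hne
        have := hle _ (half_pos hne)
        linarith
      · exact le_liminf_of_le (hbdd2.isCoboundedUnder_ge)
          (Eventually.of_forall fun t => dist_nonneg)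
    · -- diam C / 2 ≤ limsup dist (f t x) y
      have key : ∀ δ > (0:ℝ), Metric.diam C / 2 - 2*δ ≤
          limsup (fun t : ℝ => dist (f t (x:X)) y) atTop := by
        intro δ δpos
        obtain ⟨a, haC, bb, hbC, hab⟩ : ∃ a ∈ C, ∃ b ∈ C, Metric.diam C - δ ≤ dist a b := by
          by_contra hcon
          push_neg at hcon
          have h0 : 0 < Metric.diam C - δ := by
            have := hcon q hqC q hqC
            rw [dist_self] at this
            linarith
          have : Metric.diam C ≤ Metric.diam C - δ :=
            Metric.diam_le_of_forall_dist_le h0.le fun u hu v hv => (hcon u hu v hv).le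
          linarith
        have hw : ∃ w ∈ C, dist a bb / 2 ≤ dist w y := by
          rcases le_or_gt (dist a bb / 2) (dist a y) with hc | hc
          · exact ⟨a, haC, hc⟩
          · refine ⟨bb, hbC, ?_⟩
            have := dist_triangle a y bb
            rw [dist_comm y bb] at this
            linarith
        obtain ⟨w, hwC, hwy⟩ := hw
        have hfreq : ∃ᶠ t in atTop,
            Metric.diam C / 2 - 2*δ ≤ dist (f t (x:X)) y := by
          rw [frequently_atTop]
          intro n
          obtain ⟨t, htn, ht0, hd⟩ := hxdense w hwC δ δpos n
          refine ⟨t, htn, ?_⟩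
          have h3 : dist w y ≤ dist w (f t (x:X)) + dist (f t (x:X)) y := dist_triangle _ _ _
          rw [dist_comm w (f t (x:X))] at h3
          linarith
        exact le_limsup_of_frequently_le hfreq hbdd2
      by_contra hlt
      push_neg at hlt
      have hδ : 0 < (Metric.diam C / 2 -
          limsup (fun t : ℝ => dist (f t (x:X)) y) atTop) / 4 := by linarith
      have := key _ hδ
      linarith
end
end

section
/- Let f : ℝ₊ × X → X be a continuous semiflow on a compact metric space and x ∈ X. If lim_{t→∞} d(f(t,x), f(t,q)) = 0 for some q ∈ X, then C_x = C_q, i.e., the two motions have the same minimal center of attraction. -/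
open MeasureTheory Filter Metric Set Topology
open scoped Classical

noncomputable section

lemma vol_inter_Icc_le (S : Set ℝ) (T : ℝ) :
    MeasureTheory.volume (S ∩ Set.Icc 0 T) ≤ ENNReal.ofReal T := by
  refine le_trans (measure_mono inter_subset_right) ?_
  rw [Real.volume_Icc]
  simp

lemma vol_inter_Icc_ne_top (S : Set ℝ) (T : ℝ) :
    MeasureTheory.volume (S ∩ Set.Icc 0 T) ≠ ⊤ :=
  ne_top_of_le_ne_top ENNReal.ofReal_ne_top (vol_inter_Icc_le S T)

lemma hasDens_one_squeeze {S : Set ℝ} {g : ℝ → ℝ}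
    (hg : Tendsto g atTop (nhds 1))
    (hlow : ∀ᶠ T in atTop, g T ≤ (volume (S ∩ Icc 0 T)).toReal / T) :
    HasDens S 1 := by
  refine tendsto_of_tendsto_of_tendsto_of_le_of_le' hg tendsto_const_nhds hlow ?_
  filter_upwards [eventually_ge_atTop (1:ℝ)] with T hT
  rw [div_le_one (by linarith)]
  calc (volume (S ∩ Icc 0 T)).toReal
      ≤ (ENNReal.ofReal T).toReal :=
        ENNReal.toReal_mono ENNReal.ofReal_ne_top (vol_inter_Icc_le S T)
    _ = T := ENNReal.toReal_ofReal (by linarith)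

lemma hasDens_superset {S S' : Set ℝ} (T₀ : ℝ) (hS : HasDens S 1)
    (hsub : S ∩ Set.Ici T₀ ⊆ S') : HasDens S' 1 := by
  set T₁ : ℝ := max T₀ 0 with hT₁
  have hT₁0 : 0 ≤ T₁ := le_max_right _ _
  have hlim : Tendsto (fun T : ℝ => (volume (S ∩ Icc 0 T)).toReal / T - T₁ * T⁻¹)
      atTop (nhds 1) := by
    have h2 : Tendsto (fun T : ℝ => T₁ * T⁻¹) atTop (nhds (T₁ * 0)) :=
      tendsto_inv_atTop_zero.const_mul T₁
    simpa using hS.sub h2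
  refine hasDens_one_squeeze hlim ?_
  filter_upwards [eventually_ge_atTop (1:ℝ)] with T hT
  have hTpos : (0:ℝ) < T := by linarith
  have hmeas : volume (S ∩ Icc 0 T) ≤ volume (S' ∩ Icc 0 T) + ENNReal.ofReal T₁ := by
    have hsub2 : S ∩ Icc 0 T ⊆ (S' ∩ Icc 0 T) ∪ Icc 0 T₁ := by
      rintro t ⟨htS, ht0, htT⟩
      by_cases hc : T₀ ≤ t
      · exact Or.inl ⟨hsub ⟨htS, hc⟩, ht0, htT⟩
      · exact Or.inr ⟨ht0, le_trans (le_of_not_ge hc) (le_max_left _ _)⟩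
    calc volume (S ∩ Icc 0 T) ≤ volume ((S' ∩ Icc 0 T) ∪ Icc 0 T₁) := measure_mono hsub2
      _ ≤ volume (S' ∩ Icc 0 T) + volume (Icc 0 T₁) := measure_union_le _ _
      _ = volume (S' ∩ Icc 0 T) + ENNReal.ofReal T₁ := by rw [Real.volume_Icc]; simp
  have hreal : (volume (S ∩ Icc 0 T)).toReal ≤ (volume (S' ∩ Icc 0 T)).toReal + T₁ := by
    have := ENNReal.toReal_mono (by
      exact ENNReal.add_ne_top.2 ⟨vol_inter_Icc_ne_top S' T, ENNReal.ofReal_ne_top⟩) hmeas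
    rwa [ENNReal.toReal_add (vol_inter_Icc_ne_top S' T) ENNReal.ofReal_ne_top,
      ENNReal.toReal_ofReal hT₁0] at this
  have : (volume (S ∩ Icc 0 T)).toReal / T - T₁ * T⁻¹
      = ((volume (S ∩ Icc 0 T)).toReal - T₁) / T := by
    field_simp
  rw [this]
  exact (div_le_div_iff_of_pos_right hTpos).2 (by linarith)

lemma hasDens_inter {S S' : Set ℝ} (hSm : MeasurableSet S) (hS'm : MeasurableSet S')
    (hS : HasDens S 1) (hS' : HasDens S' 1) : HasDens (S ∩ S') 1 := by
  have hlim : Tendsto (fun T : ℝ =>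
      (volume (S ∩ Icc 0 T)).toReal / T + (volume (S' ∩ Icc 0 T)).toReal / T - 1)
      atTop (nhds 1) := by
    have := (hS.add hS').sub (tendsto_const_nhds (x := (1:ℝ)))
    simpa using this
  refine hasDens_one_squeeze hlim ?_
  filter_upwards [eventually_ge_atTop (1:ℝ)] with T hT
  have hTpos : (0:ℝ) < T := by linarith
  have hmeas : volume (S ∩ Icc 0 T) + volume (S' ∩ Icc 0 T)
      ≤ ENNReal.ofReal T + volume (S ∩ S' ∩ Icc 0 T) := by
    have key := measure_union_add_inter (μ := volume) (t := S' ∩ Icc 0 T) (S ∩ Icc 0 T)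
      (hS'm.inter measurableSet_Icc)
    have hset : (S ∩ Icc 0 T) ∩ (S' ∩ Icc 0 T) = S ∩ S' ∩ Icc 0 T := by
      ext t; simp only [mem_inter_iff]; tauto
    rw [hset] at key
    rw [← key]
    gcongr
    exact le_trans (measure_mono (union_subset inter_subset_right inter_subset_right))
      (by rw [Real.volume_Icc]; simp)
  have hreal : (volume (S ∩ Icc 0 T)).toReal + (volume (S' ∩ Icc 0 T)).toReal
      ≤ T + (volume (S ∩ S' ∩ Icc 0 T)).toReal := by
    have h2 := ENNReal.toReal_mono (ENNReal.add_ne_top.2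
      ⟨ENNReal.ofReal_ne_top, vol_inter_Icc_ne_top _ T⟩) hmeas
    rwa [ENNReal.toReal_add (vol_inter_Icc_ne_top S T) (vol_inter_Icc_ne_top S' T),
      ENNReal.toReal_add ENNReal.ofReal_ne_top (vol_inter_Icc_ne_top _ T),
      ENNReal.toReal_ofReal (by linarith)] at h2
  have heq : (volume (S ∩ Icc 0 T)).toReal / T + (volume (S' ∩ Icc 0 T)).toReal / T - 1
      = ((volume (S ∩ Icc 0 T)).toReal + (volume (S' ∩ Icc 0 T)).toReal - T) / T := by
    field_simp
  rw [heq]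
  exact (div_le_div_iff_of_pos_right hTpos).2 (by linarith)

lemma meas_orbit_set {X : Type*} [MetricSpace X] {f : ℝ → X → X}
    (hf : ContinuousOn (fun p : ℝ × X => f p.1 p.2) (Set.Ici 0 ×ˢ Set.univ)) (x : X)
    {U : Set X} (hU : IsOpen U) :
    MeasurableSet {t : ℝ | 0 ≤ t ∧ f t x ∈ U} := by
  have hg : ContinuousOn (fun t => f t x) (Ici 0) := by
    have : (fun t : ℝ => f t x) = (fun p : ℝ × X => f p.1 p.2) ∘ (fun t => (t, x)) := rfl
    rw [this]
    exact hf.comp (Continuous.continuousOn (by fun_prop))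
      (fun t ht => ⟨ht, mem_univ x⟩)
  obtain ⟨V, hV, hVe⟩ := (_root_.continuousOn_iff'.1 hg) U hU
  have : {t : ℝ | 0 ≤ t ∧ f t x ∈ U} = V ∩ Ici 0 := by
    rw [← hVe]; ext t
    simp only [mem_setOf_eq, mem_inter_iff, mem_preimage, mem_Ici]
    tauto
  rw [this]
  exact (hV.measurableSet).inter measurableSet_Ici

lemma isCtr_transfer {X : Type*} [MetricSpace X] {f : ℝ → X → X} {x q : X} {C : Set X}
    (hC : IsCtr f q C)
    (h : Tendsto (fun t : ℝ => dist (f t x) (f t q)) atTop (nhds 0)) : IsCtr f x C := by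
  refine ⟨hC.1, fun ε hε => ?_⟩
  obtain ⟨T₀, hT₀⟩ := (Metric.tendsto_atTop.1 h) (ε/2) (half_pos hε)
  refine hasDens_superset T₀ (hC.2 (ε/2) (half_pos hε)) ?_
  rintro t ⟨⟨ht0, htq⟩, htT⟩
  refine ⟨ht0, ?_⟩
  obtain ⟨z, hz, hdz⟩ := Metric.mem_thickening_iff.1 htq
  refine Metric.mem_thickening_iff.2 ⟨z, hz, ?_⟩
  have h2 := hT₀ t htT
  rw [Real.dist_eq, sub_zero, abs_of_nonneg dist_nonneg] at h2
  calc dist (f t x) z ≤ dist (f t x) (f t q) + dist (f t q) z := dist_triangle _ _ _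
    _ < ε/2 + ε/2 := by linarith
    _ = ε := by ring

lemma thickening_inter_subset {X : Type*} [MetricSpace X] [CompactSpace X] {C₁ C₂ : Set X}
    (h₁ : IsClosed C₁) (h₂ : IsClosed C₂) {ε : ℝ} (hε : 0 < ε) :
    ∃ δ > 0, thickening δ C₁ ∩ thickening δ C₂ ⊆ thickening ε (C₁ ∩ C₂) := by
  by_contra hcon
  push_neg at hcon
  have hch : ∀ n : ℕ, ∃ z, z ∈ thickening (1/(n+1)) C₁ ∩ thickening (1/(n+1)) C₂ ∧
      z ∉ thickening ε (C₁ ∩ C₂) := by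
    intro n
    obtain ⟨z, hz1, hz2⟩ := not_subset.1 (hcon (1/(n+1)) (by positivity))
    exact ⟨z, hz1, hz2⟩
  choose u hu₁ hu₂ using hch
  obtain ⟨z, -, φ, hφ, hz⟩ := isCompact_univ.tendsto_subseq (fun n => mem_univ (u n))
  have h1 : Tendsto (fun n : ℕ => 1/((φ n : ℝ)+1)) atTop (nhds 0) :=
    tendsto_one_div_add_atTop_nhds_zero_nat.comp hφ.tendsto_atTop
  have h2 : Tendsto (fun n => dist (u (φ n)) z) atTop (nhds 0) :=
    tendsto_iff_dist_tendsto_zero.mp hz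
  have key : ∀ C : Set X, IsClosed C →
      (∀ n : ℕ, u n ∈ thickening (1/(n+1)) C) → z ∈ C := by
    intro C hCc hmem
    rw [← hCc.closure_eq, Metric.mem_closure_iff]
    intro η hη
    obtain ⟨n, hn1, hn2⟩ := ((h1.eventually_lt_const (half_pos hη)).and
      (h2.eventually_lt_const (half_pos hη))).exists
    obtain ⟨c, hc, hdc⟩ := Metric.mem_thickening_iff.1 (hmem (φ n))
    refine ⟨c, hc, ?_⟩
    calc dist z c ≤ dist z (u (φ n)) + dist (u (φ n)) c := dist_triangle _ _ _
      _ < η/2 + η/2 := by rw [dist_comm]; exact add_lt_add hn2 (lt_trans hdc hn1)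
      _ = η := by ring
  have hz1 : z ∈ C₁ := key C₁ h₁ (fun n => (hu₁ n).1)
  have hz2 : z ∈ C₂ := key C₂ h₂ (fun n => (hu₁ n).2)
  have hzin : z ∈ thickening ε (C₁ ∩ C₂) := self_subset_thickening hε _ ⟨hz1, hz2⟩
  have := (isOpen_thickening.mem_nhds hzin)
  obtain ⟨n, hn⟩ := (hz.eventually (isOpen_thickening.mem_nhds hzin)).exists
  exact hu₂ (φ n) hn

theorem mca_eq_of_asymptotic {X : Type*} [MetricSpace X] [CompactSpace X]
    (f : ℝ → X → X) (hf : IsSemiflow f) (x q : X) (Cx Cq : Set X)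
    (hx : IsMCA f x Cx) (hq : IsMCA f q Cq)
    (h : Filter.Tendsto (fun t : ℝ => dist (f t x) (f t q)) Filter.atTop (nhds 0)) :
    Cx = Cq := by
  have hsymm : Tendsto (fun t : ℝ => dist (f t q) (f t x)) atTop (nhds 0) := by
    simpa [dist_comm] using h
  have hq_x : IsCtr f x Cq := isCtr_transfer hq.1 h
  have hx_q : IsCtr f q Cx := isCtr_transfer hx.1 hsymm
  have hctr : ∀ y : X, IsCtr f y Cx → IsCtr f y Cq → IsCtr f y (Cx ∩ Cq) := by
    intro y h1 h2
    refine ⟨h1.1.inter h2.1, fun ε hε => ?_⟩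
    obtain ⟨δ, hδ, hsub⟩ := thickening_inter_subset h1.1 h2.1 hε
    have hm1 := meas_orbit_set hf.1 y (isOpen_thickening (δ := δ) (E := Cx))
    have hm2 := meas_orbit_set hf.1 y (isOpen_thickening (δ := δ) (E := Cq))
    have hd := hasDens_inter hm1 hm2 (h1.2 δ hδ) (h2.2 δ hδ)
    refine hasDens_superset 0 hd ?_
    rintro t ⟨⟨⟨ht0, hmx⟩, ⟨-, hmq⟩⟩, -⟩
    exact ⟨ht0, hsub ⟨hmx, hmq⟩⟩
  have e1 : Cx ∩ Cq = Cx := hx.2 _ inter_subset_left (hctr x hx.1 hq_x)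
  have e2 : Cx ∩ Cq = Cq := hq.2 _ inter_subset_right (hctr q hx_q hq.1)
  rw [← e1, e2]
end
end
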